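/- Let γ be the growth function of the Mealy automaton A₆, and let Φ be the Fibonacci sequence with Φ₀ = Φ₁ = 1 and Φ_n = Φ_{n−1} + Φ_{n−2}. Then for every integer n ≥ 1: if n is even, γ(n) = Φ_{⌊n/2⌋+6} + Φ_{⌊n/2⌋+4} − 2n − 18, and if n is odd, γ(n) = Φ_{⌊n/2⌋+6} + 2·Φ_{⌊n/2⌋+4} − 2n − 18. In particular γ has exponential growth order. -/

import Mathlib

/-- The sequence of states visited by a Mealy automaton with transition function `tr`,
started at state `q`, while reading the infinite word `u`. -/
def stateSeq {X Q : Type*} (tr : X → Q → Q) (q : Q) (u : ℕ → X) : ℕ → Q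
  | 0 => q
  | k + 1 => tr (u k) (stateSeq tr q u k)

/-- The automatic transformation of infinite words defined by the Mealy automaton with
transition function `tr` and output function `out` at the state `q`. -/
def autTrans {X Q : Type*} (tr : X → Q → Q) (out : X → Q → X) (q : Q) (u : ℕ → X) : ℕ → X :=
  fun n => out (u n) (stateSeq tr q u n)

/-- The transformation given by a word of states: the product (composition, applied from
right to left) of the corresponding automatic transformations. -/
def wordTrans {X Q : Type*} (tr : X → Q → Q) (out : X → Q → X) (w : List Q) :
    (ℕ → X) → (ℕ → X) :=
  (w.map (autTrans tr out)).foldr (· ∘ ·) id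

/-- The growth function of a Mealy automaton: `growth tr out n` is the number of distinct
transformations of infinite words obtained as compositions of exactly `n` automatic
transformations of the automaton. -/
noncomputable def growth {X Q : Type*} (tr : X → Q → Q) (out : X → Q → X) (n : ℕ) : ℕ :=
  Set.ncard { g : (ℕ → X) → (ℕ → X) | ∃ w : List Q, w.length = n ∧ wordTrans tr out w = g }

/-- The `i`-th finite difference of a function `γ`. -/
def fdiff (γ : ℕ → ℤ) : ℕ → ℕ → ℤ
  | 0, n => γ n
  | i + 1, n => fdiff γ i n - fdiff γ i (n - 1)

/-- Output function of the automaton `A₆`: at `q0` the output negates each letter; at `q1`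
it is the identity; at `q2` it sends both letters to `x0`. -/
def a6Out : Fin 2 → Fin 3 → Fin 2 := fun x q =>
  if q = 0 then (if x = 0 then 1 else 0)
  else if q = 1 then x else 0

/-- Transition function of the automaton `A₆`: both transitions from `q0` stay at `q0`;
from `q1` and `q2` the transition goes to `q1` on reading `x0` and to `q2` on reading
`x1`. -/
def a6Tr : Fin 2 → Fin 3 → Fin 3 := fun x q =>
  if q = 0 then 0 else (if x = 0 then 1 else 2)

/-- The Fibonacci sequence `Φ` with `Φ₀ = Φ₁ = 1` and `Φ_n = Φ_{n−1} + Φ_{n−2}`. -/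
def Phi : ℕ → ℕ
  | 0 => 1
  | 1 => 1
  | n + 2 => Phi (n + 1) + Phi n

namespace A6
inductive Vc | v0 | v1 | vp | vn deriving DecidableEq
inductive Tc | t1 | t2 | t3 | t4 deriving DecidableEq
instance : Fintype Vc := ⟨{Vc.v0, Vc.v1, Vc.vp, Vc.vn}, fun x => by cases x <;> decide⟩
instance : Fintype Tc := ⟨{Tc.t1, Tc.t2, Tc.t3, Tc.t4}, fun x => by cases x <;> decide⟩
open Vc Tc
def flip2 : Fin 2 → Fin 2 := fun x => if x = 0 then 1 else 0
def Vev (v : Vc) (x : Fin 2) : Fin 2 :=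
  match v with
  | v0 => 0 | v1 => 1 | vp => x | vn => flip2 x
def Tev (T : Tc) (x y : Fin 2) : Fin 2 :=
  match T with
  | t1 => if x = 0 then y else 0
  | t2 => if y = 0 then x else 0
  | t3 => if x = 0 then flip2 y else 1
  | t4 => if y = 0 then flip2 x else 1
def Vnot (v : Vc) : Vc := match v with | v0 => v1 | v1 => v0 | vp => vn | vn => vp
/-- `Vandn b a` represents `b ∧ ¬ a`. -/
def Vandn (b a : Vc) : Vc :=
  match a, b with
  | v0, b => b
  | v1, _ => v0
  | vp, v0 => v0 | vp, v1 => vn | vp, vp => v0 | vp, vn => vn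
  | vn, v0 => v0 | vn, v1 => vp | vn, vp => vp | vn, vn => v0
def Tnot (T : Tc) : Tc := match T with | t1 => t3 | t3 => t1 | t2 => t4 | t4 => t2
def Tand (T : Tc) : Tc := match T with | t3 => t1 | t4 => t2 | T => T
def Tor (T : Tc) : Tc := match T with | t1 => t3 | t2 => t4 | T => T
def Tc.isAnd (T : Tc) : Bool := match T with | t1 => true | t2 => true | _ => false
def appV (T : Tc) (v : Vc) : Vc :=
  match T, v with
  | t3, v1 => v0 | t3, vn => vp | t4, v1 => v0 | t4, vp => vn | _, _ => v0
def off (T : Tc) : ℕ := match T with | t1 => 0 | t2 => 1 | t3 => 1 | t4 => 2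
def andP (a b : Vc) : Bool :=
  match a, b with
  | v0, _ => true | v1, v0 => true | vn, vp => true | vp, vn => true | _, _ => false
def pairT (T : Tc) (a b : Vc) : Bool :=
  if T.isAnd then andP a b else andP (Vnot a) (Vnot b)
def lastT (T : Tc) (v : Vc) : Bool :=
  match T, v with
  | t1, v0 => true | t1, vp => true
  | t2, v0 => true | t2, vn => true
  | t3, v1 => true | t3, vn => true
  | t4, v1 => true | t4, vp => true
  | _, _ => false
def validB (T : Tc) : List Vc → Bool
  | [] => false
  | [v] => lastT T v
  | a :: b :: l => pairT T a b && validB T (b :: l)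
inductive D | triv (b : Bool) | elt (β : List Vc) (T : Tc) deriving DecidableEq
def gand : Vc → List Vc → List Vc
  | _, [] => []
  | p, x :: l => Vandn x p :: gand x l
def gor (T : Tc) : Vc → List Vc → List Vc
  | p, [] => [appV T p]
  | p, x :: l => Vandn x p :: gor T x l
def mulGen (q : Fin 3) : D → D
  | D.triv b =>
      if q = 0 then D.triv (!b)
      else if b then D.elt [if q = 1 then vn else v0] t2
      else D.elt [if q = 1 then vp else v0] t1
  | D.elt β T =>
      if q = 0 then D.elt (β.map Vnot) (Tnot T)
      else match β with
        | [] => D.elt [] T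
        | v :: l =>
          if T.isAnd then D.elt ((if q = 1 then v else v0) :: gand v l) T
          else D.elt ((if q = 1 then v else v0) :: gor T v l) (Tand T)
def evalD : D → (ℕ → Fin 2) → (ℕ → Fin 2)
  | D.triv b => fun u n => if b then flip2 (u n) else u n
  | D.elt β T => fun u n =>
      if n < β.length then Vev (β.getD n v0) (u 0)
      else Tev T (u (n - β.length)) (u (n - β.length + 1))
def GoodD : D → Prop
  | D.triv _ => True
  | D.elt β T => validB T β = true
def descD (w : List (Fin 3)) : D := w.foldr mulGen (D.triv false)

-- basic automaton lemmas
lemma stateSeq_zero (u : ℕ → Fin 2) (n : ℕ) : stateSeq a6Tr 0 u n = 0 := by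
  induction n with
  | zero => rfl
  | succ n ih => simp [stateSeq, ih, a6Tr]
lemma a6Tr_eq (x : Fin 2) (s : Fin 3) :
    a6Tr x s = if s = 0 then 0 else if x = 0 then 1 else 2 := rfl
lemma stateSeq_ne (q : Fin 3) (hq : q ≠ 0) (u : ℕ → Fin 2) (n : ℕ) :
    stateSeq a6Tr q u n ≠ 0 := by
  induction n with
  | zero => exact hq
  | succ n ih =>
    show a6Tr (u n) (stateSeq a6Tr q u n) ≠ 0
    rw [a6Tr_eq, if_neg ih]
    split <;> decide
lemma autTrans_zero (u : ℕ → Fin 2) (n : ℕ) :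
    autTrans a6Tr a6Out 0 u n = flip2 (u n) := by
  unfold autTrans a6Out flip2
  rw [stateSeq_zero]
  simp
lemma autTrans_q_succ (q : Fin 3) (hq : q ≠ 0) (u : ℕ → Fin 2) (n : ℕ) :
    autTrans a6Tr a6Out q u (n + 1) = Tev t1 (u n) (u (n + 1)) := by
  unfold autTrans
  show a6Out (u (n+1)) (a6Tr (u n) (stateSeq a6Tr q u n)) = _
  rw [a6Tr_eq, if_neg (stateSeq_ne q hq u n)]
  unfold a6Out Tev
  by_cases h : u n = 0 <;> simp [h]
lemma autTrans_one_zero (u : ℕ → Fin 2) : autTrans a6Tr a6Out 1 u 0 = u 0 := by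
  unfold autTrans stateSeq a6Out; norm_num
lemma autTrans_two_zero (u : ℕ → Fin 2) : autTrans a6Tr a6Out 2 u 0 = 0 := by
  unfold autTrans stateSeq a6Out
  norm_num [show (2:Fin 3) ≠ 0 by decide, show (2:Fin 3) ≠ 1 by decide]
end A6
-- list helper lemmas + decide cores + main eval lemma
namespace A6
open Vc Tc

lemma len_gand (l : List Vc) : ∀ p, (gand p l).length = l.length := by
  induction l with
  | nil => intro p; rfl
  | cons x l ih => intro p; simp [gand, ih]
lemma len_gor (T : Tc) (l : List Vc) : ∀ p, (gor T p l).length = l.length + 1 := by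
  induction l with
  | nil => intro p; rfl
  | cons x l ih => intro p; simp [gor, ih]
lemma gand_getD (l : List Vc) : ∀ p i, i < l.length →
    (gand p l).getD i v0 = Vandn (l.getD i v0) ((p :: l).getD i v0) := by
  induction l with
  | nil => intro p i h; simp at h
  | cons x l ih =>
    intro p i h
    match i with
    | 0 => rfl
    | i + 1 =>
      simp only [gand, List.getD_cons_succ]
      exact ih x i (by simpa using h)
lemma gor_getD_lt (T : Tc) (l : List Vc) : ∀ p i, i < l.length →
    (gor T p l).getD i v0 = Vandn (l.getD i v0) ((p :: l).getD i v0) := by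
  induction l with
  | nil => intro p i h; simp at h
  | cons x l ih =>
    intro p i h
    match i with
    | 0 => rfl
    | i + 1 =>
      simp only [gor, List.getD_cons_succ]
      exact ih x i (by simpa using h)
lemma gor_getD_eq (T : Tc) (l : List Vc) : ∀ p,
    (gor T p l).getD l.length v0 = appV T ((p :: l).getD l.length v0) := by
  induction l with
  | nil => intro p; rfl
  | cons x l ih => intro p; simpa [gor] using ih x
lemma getD_map_vnot (l : List Vc) : ∀ i, i < l.length →
    (l.map Vnot).getD i v0 = Vnot (l.getD i v0) := by
  induction l with
  | nil => intro i h; simp at h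
  | cons x l ih =>
    intro i h
    match i with
    | 0 => rfl
    | i + 1 => simpa using ih i (by simpa using h)
lemma validB_cons {T a b l} (h : validB T (a :: b :: l) = true) :
    pairT T a b = true ∧ validB T (b :: l) = true := by
  simpa [validB, Bool.and_eq_true] using h
lemma validB_last (T : Tc) (β : List Vc) (h : validB T β = true) :
    lastT T (β.getD (β.length - 1) v0) = true := by
  induction β with
  | nil => simp [validB] at h
  | cons a l ih =>
    match l, h with
    | [], h => simpa [validB] using h
    | b :: l, h =>
      have := ih (validB_cons h).2
      simpa using this

-- decide cores
lemma E1 : ∀ a b (x : Fin 2), Tev t1 (Vev a x) (Vev b x) = Vev (Vandn b a) x := by decide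
lemma E2 : ∀ T v, T.isAnd = true → lastT T v = true →
    ∀ x y, Tev t1 (Vev v x) (Tev T x y) = Tev T x y := by decide
lemma E3 : ∀ T, T.isAnd = true → ∀ x y z, Tev t1 (Tev T x y) (Tev T y z) = Tev T y z := by decide
lemma E4 : ∀ T v, T.isAnd = false → lastT T v = true →
    ∀ x y, Tev t1 (Vev v x) (Tev T x y) = Vev (appV T v) x := by decide
lemma E5 : ∀ T, T.isAnd = false →
    ∀ x y z, Tev t1 (Tev T x y) (Tev T y z) = Tev (Tand T) x y := by decide
lemma E6 : ∀ v x, flip2 (Vev v x) = Vev (Vnot v) x := by decide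
lemma E7 : ∀ T x y, flip2 (Tev T x y) = Tev (Tnot T) x y := by decide
lemma EC : ∀ x y, Tev t1 (flip2 x) (flip2 y) = Tev t2 x y := by decide
lemma flip2_flip2 : ∀ x, flip2 (flip2 x) = x := by decide

lemma evalD_elt (β : List Vc) (T : Tc) (u : ℕ → Fin 2) (n : ℕ) :
    evalD (D.elt β T) u n =
      if n < β.length then Vev (β.getD n v0) (u 0)
      else Tev T (u (n - β.length)) (u (n - β.length + 1)) := rfl

lemma mul0_eval (d : D) :
    autTrans a6Tr a6Out 0 ∘ evalD d = evalD (mulGen 0 d) := by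
  funext u m
  show autTrans a6Tr a6Out 0 (evalD d u) m = _
  rw [autTrans_zero]
  cases d with
  | triv b =>
    cases b <;> simp [evalD, mulGen, flip2_flip2]
  | elt β T =>
    have : mulGen 0 (D.elt β T) = D.elt (β.map Vnot) (Tnot T) := by
      cases β <;> simp [mulGen]
    rw [this]
    rw [evalD_elt, evalD_elt, List.length_map]
    by_cases h : m < β.length
    · rw [if_pos h, if_pos h, getD_map_vnot β m h, ← E6]
    · rw [if_neg h, if_neg h, ← E7]
open Vc Tc

lemma mul12_eval (q : Fin 3) (hq : q = 1 ∨ q = 2) (d : D) (hd : GoodD d) :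
    autTrans a6Tr a6Out q ∘ evalD d = evalD (mulGen q d) := by
  have hq0 : q ≠ 0 := by rcases hq with h | h <;> subst h <;> decide
  cases d with
  | triv b =>
    have hmg : mulGen q (D.triv b) =
        D.elt [if q = 1 then (if b then vn else vp) else v0] (if b then t2 else t1) := by
      rcases hq with rfl | rfl <;> cases b <;> simp [mulGen]
    funext u m
    show autTrans a6Tr a6Out q (evalD (D.triv b) u) m = _
    rw [hmg]
    cases m with
    | zero =>
      rcases hq with rfl | rfl
      · rw [autTrans_one_zero]
        cases b <;> simp [evalD, evalD_elt, Vev]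
      · rw [autTrans_two_zero]
        cases b <;> simp [evalD_elt, Vev, show (2:Fin 3) ≠ 1 by decide]
    | succ n =>
      rw [autTrans_q_succ q hq0]
      rw [evalD_elt]
      simp only [List.length_singleton]
      rw [if_neg (by omega : ¬ (n + 1 < 1)), (by omega : n + 1 - 1 = n)]
      cases b
      · rfl
      · exact EC _ _
  | elt β T =>
    match β, hd with
    | v :: l, hd =>
    have hβ : (v :: l : List Vc).length = l.length + 1 := rfl
    have hlast : lastT T ((v :: l).getD l.length v0) = true := by
      have h := validB_last T (v :: l) hd
      simpa using h
    have hmg : mulGen q (D.elt (v :: l) T) =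
        (if T.isAnd then D.elt ((if q = 1 then v else v0) :: gand v l) T
         else D.elt ((if q = 1 then v else v0) :: gor T v l) (Tand T)) := by
      simp [mulGen, hq0]
    funext u m
    show autTrans a6Tr a6Out q (evalD (D.elt (v :: l) T) u) m = _
    rw [hmg]
    by_cases hA : T.isAnd
    · rw [if_pos hA]
      cases m with
      | zero =>
        rcases hq with rfl | rfl
        · rw [autTrans_one_zero]
          simp [evalD_elt, len_gand]
        · rw [autTrans_two_zero]
          simp [evalD_elt, len_gand, Vev, show (2:Fin 3) ≠ 1 by decide]
      | succ n =>
        rw [autTrans_q_succ q hq0]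
        rw [evalD_elt (((if q = 1 then v else v0)) :: gand v l)]
        have hlen : (((if q = 1 then v else v0)) :: gand v l).length = l.length + 1 := by
          simp [len_gand]
        rw [hlen]
        by_cases h1 : n + 1 < l.length + 1
        · rw [if_pos h1]
          have hn : n < l.length := by omega
          rw [evalD_elt, evalD_elt, hβ]
          rw [if_pos (by omega : n < l.length + 1), if_pos h1]
          rw [E1, List.getD_cons_succ, List.getD_cons_succ, gand_getD l v n hn]
        · rw [if_neg h1]
          by_cases h2 : n + 1 = l.length + 1
          · rw [(by omega : n = l.length)]
            rw [evalD_elt, evalD_elt, hβ]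
            rw [if_pos (by omega : l.length < l.length + 1),
              if_neg (by omega : ¬ (l.length + 1 < l.length + 1))]
            rw [(by omega : l.length + 1 - (l.length + 1) = 0)]
            exact E2 T _ hA hlast _ _
          · rw [evalD_elt, evalD_elt, hβ]
            rw [if_neg (by omega : ¬ (n < l.length + 1)), if_neg h1]
            rw [(by omega : n + 1 - (l.length + 1) = (n - (l.length + 1)) + 1)]
            exact E3 T hA _ _ _
    · rw [if_neg hA]
      have hA' : T.isAnd = false := by simpa using hA
      cases m with
      | zero =>
        rcases hq with rfl | rfl
        · rw [autTrans_one_zero]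
          simp [evalD_elt, len_gor]
        · rw [autTrans_two_zero]
          simp [evalD_elt, len_gor, Vev, show (2:Fin 3) ≠ 1 by decide]
      | succ n =>
        rw [autTrans_q_succ q hq0]
        rw [evalD_elt (((if q = 1 then v else v0)) :: gor T v l)]
        have hlen : (((if q = 1 then v else v0)) :: gor T v l).length = l.length + 2 := by
          simp [len_gor]
        rw [hlen]
        by_cases h1 : n + 1 < l.length + 1
        · rw [if_pos (by omega : n + 1 < l.length + 2)]
          have hn : n < l.length := by omega
          rw [evalD_elt, evalD_elt, hβ]
          rw [if_pos (by omega : n < l.length + 1), if_pos h1]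
          rw [E1, List.getD_cons_succ, List.getD_cons_succ, gor_getD_lt T l v n hn]
        · by_cases h2 : n + 1 = l.length + 1
          · rw [if_pos (by omega : n + 1 < l.length + 2)]
            rw [(by omega : n = l.length)]
            rw [evalD_elt, evalD_elt, hβ]
            rw [if_pos (by omega : l.length < l.length + 1),
              if_neg (by omega : ¬ (l.length + 1 < l.length + 1))]
            rw [(by omega : l.length + 1 - (l.length + 1) = 0)]
            rw [E4 T _ hA' hlast]
            rw [List.getD_cons_succ, gor_getD_eq T l v]
          · rw [if_neg (by omega : ¬ (n + 1 < l.length + 2))]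
            rw [evalD_elt, evalD_elt, hβ]
            rw [if_neg (by omega : ¬ (n < l.length + 1)), if_neg h1]
            rw [(by omega : n + 1 - (l.length + 1) = (n - (l.length + 1)) + 1)]
            rw [E5 T hA']
            rw [(by omega : n + 1 - (l.length + 2) = n - (l.length + 1))]
open Vc Tc

-- decide cores for validity preservation
lemma P1 : ∀ T a b, T.isAnd = true → pairT T a b = true → Vandn b a = b := by decide
lemma PV1 : ∀ T a b, pairT T a b = true → pairT (Tnot T) (Vnot a) (Vnot b) = true := by decide
lemma PV2 : ∀ T v, lastT T v = true → lastT (Tnot T) (Vnot v) = true := by decide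
lemma PA0 : ∀ T x, T.isAnd = true → pairT T v0 x = true := by decide
lemma PA1 : ∀ T, T.isAnd = true → lastT T v0 = true := by decide
lemma C0 : ∀ T v, T.isAnd = false → lastT T v = true → lastT (Tand T) (appV T v) = true := by decide
lemma C1 : ∀ T v x, T.isAnd = false → pairT T v x = true → lastT T x = true →
    pairT (Tand T) (Vandn x v) (appV T x) = true := by decide
lemma C2 : ∀ T v x y, T.isAnd = false → pairT T v x = true → pairT T x y = true →
    pairT (Tand T) (Vandn x v) (Vandn y x) = true := by decide
lemma C3 : ∀ T v, T.isAnd = false → lastT T v = true →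
    pairT (Tand T) v (appV T v) = true ∧ pairT (Tand T) v0 (appV T v) = true := by decide
lemma C4 : ∀ T v x, T.isAnd = false → pairT T v x = true →
    pairT (Tand T) v (Vandn x v) = true ∧ pairT (Tand T) v0 (Vandn x v) = true := by decide

lemma validB_map_vnot (T : Tc) : ∀ β, validB T β = true → validB (Tnot T) (β.map Vnot) = true := by
  intro β h
  induction β with
  | nil => simp [validB] at h
  | cons a l ih =>
    match l, h with
    | [], h => simpa [validB] using PV2 T a (by simpa [validB] using h)
    | b :: l, h =>
      obtain ⟨h1, h2⟩ := validB_cons h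
      have := ih h2
      simpa [validB, List.map] using ⟨PV1 T a b h1, by simpa [validB] using this⟩

lemma gand_eq (T : Tc) (hA : T.isAnd = true) :
    ∀ l v, validB T (v :: l) = true → gand v l = l := by
  intro l
  induction l with
  | nil => intro v _; rfl
  | cons x l ih =>
    intro v h
    obtain ⟨h1, h2⟩ := validB_cons h
    show Vandn x v :: gand x l = x :: l
    rw [P1 T v x hA h1, ih x h2]

lemma validB_head0 (T : Tc) (hA : T.isAnd = true) :
    ∀ l v, validB T (v :: l) = true → validB T (v0 :: l) = true := by
  intro l v h
  match l, h with
  | [], h => simpa [validB] using PA1 T hA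
  | x :: l, h =>
    obtain ⟨h1, h2⟩ := validB_cons h
    simpa [validB, Bool.and_eq_true] using ⟨PA0 T x hA, h2⟩

def gorHead (T : Tc) (v : Vc) : List Vc → Vc
  | [] => appV T v
  | x :: _ => Vandn x v

lemma gor_head (T : Tc) (v : Vc) (l : List Vc) :
    gor T v l = gorHead T v l :: (gor T v l).tail := by
  cases l <;> rfl

lemma gor_valid (T : Tc) (hA : T.isAnd = false) :
    ∀ l v w, validB T (v :: l) = true → pairT (Tand T) w (gorHead T v l) = true →
      validB (Tand T) (w :: gor T v l) = true := by
  intro l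
  induction l with
  | nil =>
    intro v w h hw
    have hl : lastT T v = true := by simpa [validB] using h
    show validB (Tand T) [w, appV T v] = true
    simp [validB, Bool.and_eq_true]
    exact ⟨by simpa [gorHead] using hw, C0 T v hA hl⟩
  | cons x l ih =>
    intro v w h hw
    obtain ⟨h1, h2⟩ := validB_cons h
    show validB (Tand T) (w :: Vandn x v :: gor T x l) = true
    have hnext : pairT (Tand T) (Vandn x v) (gorHead T x l) = true := by
      cases l with
      | nil => exact C1 T v x hA h1 (by simpa [validB] using h2)
      | cons y l' => exact C2 T v x y hA h1 (validB_cons h2).1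
    have hrec : validB (Tand T) (Vandn x v :: gor T x l) = true := ih x (Vandn x v) h2 hnext
    rw [show validB (Tand T) (w :: Vandn x v :: gor T x l) =
      (pairT (Tand T) w (Vandn x v) && validB (Tand T) (Vandn x v :: gor T x l)) from rfl]
    rw [hrec, (by simpa [gorHead] using hw : pairT (Tand T) w (Vandn x v) = true)]
    rfl

lemma gor_headpair (T : Tc) (hA : T.isAnd = false) (l : List Vc) (v : Vc)
    (h : validB T (v :: l) = true) :
    pairT (Tand T) v (gorHead T v l) = true ∧ pairT (Tand T) v0 (gorHead T v l) = true := by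
  cases l with
  | nil => exact C3 T v hA (by simpa [validB] using h)
  | cons x l' => exact C4 T v x hA (validB_cons h).1

lemma Good_mul (q : Fin 3) (d : D) (hd : GoodD d) : GoodD (mulGen q d) := by
  have hq : q = 0 ∨ q = 1 ∨ q = 2 := by omega
  cases d with
  | triv b =>
    rcases hq with rfl | rfl | rfl <;> cases b <;> simp [mulGen, GoodD, validB, lastT]
  | elt β T =>
    match β, hd with
    | v :: l, hd =>
    rcases hq with rfl | rfl | rfl
    · simpa [mulGen, GoodD] using validB_map_vnot T (v :: l) hd
    · by_cases hA : T.isAnd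
      · have : mulGen 1 (D.elt (v :: l) T) = D.elt (v :: gand v l) T := by
          simp [mulGen, hA]
        rw [this, GoodD, gand_eq T hA l v hd]
        exact hd
      · have hA' : T.isAnd = false := by simpa using hA
        have : mulGen 1 (D.elt (v :: l) T) = D.elt (v :: gor T v l) (Tand T) := by
          simp [mulGen, hA']
        rw [this]
        exact gor_valid T hA' l v v hd (gor_headpair T hA' l v hd).1
    · by_cases hA : T.isAnd
      · have : mulGen 2 (D.elt (v :: l) T) = D.elt (v0 :: gand v l) T := by
          simp [mulGen, hA, show (2:Fin 3) ≠ 0 by decide, show (2:Fin 3) ≠ 1 by decide]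
        rw [this, GoodD, gand_eq T hA l v hd]
        exact validB_head0 T hA l v hd
      · have hA' : T.isAnd = false := by simpa using hA
        have : mulGen 2 (D.elt (v :: l) T) = D.elt (v0 :: gor T v l) (Tand T) := by
          simp [mulGen, hA', show (2:Fin 3) ≠ 0 by decide, show (2:Fin 3) ≠ 1 by decide]
        rw [this]
        exact gor_valid T hA' l v v0 hd (gor_headpair T hA' l v hd).2

lemma mulGen_eval (q : Fin 3) (d : D) (hd : GoodD d) :
    autTrans a6Tr a6Out q ∘ evalD d = evalD (mulGen q d) := by
  have hq : q = 0 ∨ q = 1 ∨ q = 2 := by omega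
  rcases hq with rfl | rfl | rfl
  · exact mul0_eval d
  · exact mul12_eval 1 (Or.inl rfl) d hd
  · exact mul12_eval 2 (Or.inr rfl) d hd

lemma descD_good : ∀ w : List (Fin 3), GoodD (descD w)
  | [] => trivial
  | q :: w => Good_mul q (descD w) (descD_good w)

lemma wordTrans_eq : ∀ w : List (Fin 3), wordTrans a6Tr a6Out w = evalD (descD w)
  | [] => rfl
  | q :: w => by
    have : wordTrans a6Tr a6Out (q :: w) = autTrans a6Tr a6Out q ∘ wordTrans a6Tr a6Out w := rfl
    rw [this, wordTrans_eq w, mulGen_eval q (descD w) (descD_good w)]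
    rfl
open Vc Tc

lemma Vev_inj : ∀ v w : Vc, Vev v 0 = Vev w 0 → Vev v 1 = Vev w 1 → v = w := by decide
lemma Tev_inj : ∀ T T' : Tc, (∀ x y, Tev T x y = Tev T' x y) → T = T' := by decide
lemma Tev_dep : ∀ T : Tc, ∃ x, Tev T x 0 ≠ Tev T x 1 := by decide
lemma Tev_nonconst : ∀ T T' : Tc, ∃ x y, Tev T x y ≠ Tev T' 0 0 := by decide
lemma Tev_vs_flip : ∀ (T : Tc) (b : Bool), ∃ x y, Tev T x y ≠ (if b then flip2 y else y) := by
  decide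
lemma validB_pos {T β} (h : validB T β = true) : 0 < β.length := by
  cases β
  · simp [validB] at h
  · simp

lemma list_ext_getD : ∀ (l l' : List Vc), l.length = l'.length →
    (∀ i, i < l.length → l.getD i v0 = l'.getD i v0) → l = l' := by
  intro l
  induction l with
  | nil => intro l' h _; cases l' <;> simp_all
  | cons a t ih =>
    intro l' hlen hget
    cases l' with
    | nil => simp at hlen
    | cons b t' =>
      have h0 := hget 0 (by simp)
      simp at h0
      subst h0
      have := ih t' (by simpa using hlen) (fun i hi => by
        have := hget (i+1) (by simpa using Nat.succ_lt_succ hi)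
        simpa using this)
      rw [this]

lemma evalD_elt_tail (β : List Vc) (T : Tc) (u : ℕ → Fin 2) (n : ℕ) (h : β.length ≤ n) :
    evalD (D.elt β T) u n = Tev T (u (n - β.length)) (u (n - β.length + 1)) := by
  rw [evalD_elt, if_neg (by omega)]

lemma evalD_elt_head (β : List Vc) (T : Tc) (u : ℕ → Fin 2) (n : ℕ) (h : n < β.length) :
    evalD (D.elt β T) u n = Vev (β.getD n v0) (u 0) := by
  rw [evalD_elt, if_pos h]

lemma len_eq_of_le (β β' : List Vc) (T T' : Tc)
    (hv : validB T β = true) (hv' : validB T' β' = true)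
    (h : evalD (D.elt β T) = evalD (D.elt β' T'))
    (hle : β.length ≤ β'.length) : β.length = β'.length := by
  by_contra hne
  have hk : β.length < β'.length := by omega
  by_cases hj : β'.length - β.length = 1
  · obtain ⟨x, hx⟩ := Tev_dep T
    have h0 := congrFun (congrFun h (fun m => if 2 ≤ m then 0 else x)) β'.length
    have h1 := congrFun (congrFun h (fun m => if 2 ≤ m then 1 else x)) β'.length
    rw [evalD_elt_tail β T _ β'.length (by omega),
      evalD_elt_tail β' T' _ β'.length (by omega)] at h0 h1
    rw [hj, (show β'.length - β'.length = 0 by omega)] at h0 h1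
    rw [if_neg (show ¬ (2:ℕ) ≤ 1 by omega), if_pos (show (2:ℕ) ≤ 1 + 1 by omega),
      if_neg (show ¬ (2:ℕ) ≤ 0 by omega)] at h0 h1
    exact hx (h0.trans h1.symm)
  · obtain ⟨x, y, hxy⟩ := Tev_nonconst T T'
    have h0 := congrFun (congrFun h
      (fun m => if m = β'.length - β.length then x
        else if m = β'.length - β.length + 1 then y else 0)) β'.length
    rw [evalD_elt_tail β T _ β'.length (by omega),
      evalD_elt_tail β' T' _ β'.length (by omega)] at h0
    rw [(show β'.length - β'.length = 0 by omega)] at h0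
    rw [if_pos (show β'.length - β.length = β'.length - β.length from rfl),
      if_neg (show ¬ β'.length - β.length + 1 = β'.length - β.length by omega),
      if_pos (show β'.length - β.length + 1 = β'.length - β.length + 1 from rfl),
      if_neg (show ¬ (0:ℕ) = β'.length - β.length by omega),
      if_neg (show ¬ (0:ℕ) = β'.length - β.length + 1 by omega),
      if_neg (show ¬ (0:ℕ) + 1 = β'.length - β.length by omega),
      if_neg (show ¬ (0:ℕ) + 1 = β'.length - β.length + 1 by omega)] at h0
    exact hxy h0

lemma triv_ne_elt (b : Bool) (β : List Vc) (T : Tc) (hv : validB T β = true)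
    (h : evalD (D.triv b) = evalD (D.elt β T)) : False := by
  obtain ⟨x, y, hxy⟩ := Tev_vs_flip T b
  have hk := validB_pos hv
  have h0 := congrFun (congrFun h (fun m => if m = 0 then x else y)) β.length
  rw [evalD_elt_tail β T _ _ (by omega),
    (show β.length - β.length = 0 by omega)] at h0
  rw [if_pos (show (0:ℕ) = 0 from rfl), if_neg (show ¬ (0:ℕ) + 1 = 0 by omega)] at h0
  simp only [evalD] at h0
  rw [if_neg (show ¬ β.length = 0 by omega)] at h0
  exact hxy h0.symm

lemma evalD_inj (d d' : D) (hd : GoodD d) (hd' : GoodD d')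
    (h : evalD d = evalD d') : d = d' := by
  cases d with
  | triv b =>
    cases d' with
    | triv b' =>
      have := congrFun (congrFun h (fun _ => 0)) 0
      cases b <;> cases b' <;> simp [evalD, flip2] at this <;> rfl
    | elt β' T' => exact absurd h (fun hh => triv_ne_elt b β' T' hd' hh)
  | elt β T =>
    cases d' with
    | triv b' => exact absurd h.symm (fun hh => triv_ne_elt b' β T hd hh)
    | elt β' T' =>
      have hlen : β.length = β'.length := by
        rcases le_total β.length β'.length with hle | hle
        · exact len_eq_of_le β β' T T' hd hd' h hle
        · exact (len_eq_of_le β' β T' T hd' hd h.symm hle).symm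
      have hT : T = T' := by
        apply Tev_inj
        intro x y
        have hk := validB_pos (T := T) hd
        have h0 := congrFun (congrFun h (fun m => if m = 0 then x else y)) β.length
        rw [evalD_elt_tail β T _ _ (by omega),
          evalD_elt_tail β' T' _ _ (by omega)] at h0
        rw [(show β.length - β.length = 0 by omega),
          (show β.length - β'.length = 0 by omega)] at h0
        rw [if_pos (show (0:ℕ) = 0 from rfl), if_neg (show ¬ (0:ℕ) + 1 = 0 by omega)] at h0
        exact h0
      have hβ : β = β' := by
        apply list_ext_getD β β' hlen
        intro i hi
        have g0 := congrFun (congrFun h (fun _ => (0 : Fin 2))) i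
        have g1 := congrFun (congrFun h (fun _ => (1 : Fin 2))) i
        rw [evalD_elt_head β T _ i hi, evalD_elt_head β' T' _ i (by omega)] at g0 g1
        exact Vev_inj _ _ g0 g1
      rw [hT, hβ]
open Vc Tc Finset

def VHF (T : Tc) : ℕ → Vc → Finset (List Vc)
  | 0, _ => ∅
  | 1, v => if lastT T v then {[v]} else ∅
  | (k+2), v => (Finset.univ.filter (fun w => pairT T v w = true)).biUnion
      (fun w => (VHF T (k+1) w).image (List.cons v))

lemma mem_VHF (T : Tc) : ∀ (k : ℕ) (v : Vc) (l : List Vc),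
    l ∈ VHF T k v ↔ l.length = k ∧ l.head? = some v ∧ validB T l = true := by
  intro k
  induction k with
  | zero =>
    intro v l
    simp only [VHF, Finset.notMem_empty, false_iff]
    rintro ⟨h1, h2, h3⟩
    have := validB_pos h3
    omega
  | succ k ih =>
    intro v l
    cases k with
    | zero =>
      simp only [VHF]
      by_cases hv : lastT T v = true
      · rw [if_pos hv]
        simp only [Finset.mem_singleton]
        constructor
        · rintro rfl
          exact ⟨rfl, rfl, by simpa [validB] using hv⟩
        · rintro ⟨h1, h2, h3⟩
          match l, h1 with
          | [a], _ =>
            simp only [List.head?] at h2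
            injection h2 with h2
            rw [h2]
      · rw [if_neg hv]
        simp only [Finset.notMem_empty, false_iff]
        rintro ⟨h1, h2, h3⟩
        match l, h1 with
        | [a], _ =>
          simp only [List.head?] at h2
          injection h2 with h2
          subst h2
          exact hv (by simpa [validB] using h3)
    | succ k =>
      show l ∈ (Finset.univ.filter (fun w => pairT T v w = true)).biUnion
        (fun w => (VHF T (k+1) w).image (List.cons v)) ↔ _
      simp only [Finset.mem_biUnion, Finset.mem_filter, Finset.mem_univ, true_and,
        Finset.mem_image]
      constructor
      · rintro ⟨w, hw, t, ht, rfl⟩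
        obtain ⟨ht1, ht2, ht3⟩ := (ih w t).mp ht
        refine ⟨by simp [ht1], rfl, ?_⟩
        match t, ht2 with
        | b :: t', ht2 =>
          simp only [List.head?] at ht2
          injection ht2 with ht2
          subst ht2
          simpa [validB, Bool.and_eq_true] using ⟨hw, ht3⟩
      · rintro ⟨h1, h2, h3⟩
        match l with
        | a :: t =>
          simp only [List.head?] at h2
          injection h2 with h2
          subst h2
          match t, h1 with
          | b :: t', h1 =>
            obtain ⟨hp, hv2⟩ := validB_cons h3
            refine ⟨b, hp, b :: t', (ih b (b :: t')).mpr ⟨by simpa using h1, rfl, hv2⟩, rfl⟩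

def EB (T : Tc) (k : ℕ) : Finset (List Vc) := Finset.univ.biUnion (fun v => VHF T k v)

lemma mem_EB (T : Tc) (k : ℕ) (l : List Vc) :
    l ∈ EB T k ↔ l.length = k ∧ validB T l = true := by
  simp only [EB, Finset.mem_biUnion, Finset.mem_univ, true_and, mem_VHF]
  constructor
  · rintro ⟨v, h1, _, h3⟩; exact ⟨h1, h3⟩
  · rintro ⟨h1, h2⟩
    match l, validB_pos h2 with
    | a :: t, _ => exact ⟨a, h1, rfl, h2⟩
open Vc Tc Finset

lemma card_VHF_step (T : Tc) (k : ℕ) (hk : 1 ≤ k) (v : Vc) :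
    (VHF T (k+1) v).card =
      ∑ w ∈ Finset.univ.filter (fun w => pairT T v w = true), (VHF T k w).card := by
  obtain ⟨m, rfl⟩ : ∃ m, k = m + 1 := ⟨k-1, by omega⟩
  show ((Finset.univ.filter _).biUnion _).card = _
  rw [Finset.card_biUnion]
  · exact Finset.sum_congr rfl fun w _ =>
      Finset.card_image_of_injective _ (fun a b h => by injection h)
  · intro w1 h1 w2 h2 hne
    simp only [Finset.disjoint_left, Finset.mem_image]
    rintro l ⟨t, ht, rfl⟩ ⟨t', ht', he⟩
    obtain ⟨_, hh1, _⟩ := (mem_VHF T _ w1 t).mp ht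
    obtain ⟨_, hh2, _⟩ := (mem_VHF T _ w2 t').mp ht'
    injection he with _ he
    subst he
    rw [hh1] at hh2
    injection hh2 with hh2
    exact hne hh2

lemma VHF_closed (T : Tc) (hub spoke podd peven : Vc)
    (hdistinct : ({hub, spoke, podd, peven} : Finset Vc) = Finset.univ)
    (hd1 : hub ∉ ({spoke, podd, peven} : Finset Vc))
    (hd2 : spoke ∉ ({podd, peven} : Finset Vc))
    (hd3 : podd ∉ ({peven} : Finset Vc))
    (f1 : Finset.univ.filter (fun w => pairT T hub w = true) = Finset.univ)
    (f2 : Finset.univ.filter (fun w => pairT T spoke w = true) = {hub})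
    (f3 : Finset.univ.filter (fun w => pairT T podd w = true) = {peven})
    (f4 : Finset.univ.filter (fun w => pairT T peven w = true) = {podd})
    (b1 : (VHF T 1 hub).card = 1) (b2 : (VHF T 1 spoke).card = 0)
    (b3 : (VHF T 1 podd).card = 1) (b4 : (VHF T 1 peven).card = 0) :
    ∀ k, 1 ≤ k → (VHF T k hub).card + 1 = Phi (k+1) ∧ (VHF T k spoke).card + 1 = Phi k ∧
      (VHF T k podd).card + (VHF T k peven).card = 1 := by
  intro k
  induction k with
  | zero => omega
  | succ k ih =>
    intro _
    by_cases hk : 1 ≤ k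
    · obtain ⟨ih1, ih2, ih3⟩ := ih hk
      have e1 : (VHF T (k+1) hub).card =
          (VHF T k hub).card + ((VHF T k spoke).card +
            ((VHF T k podd).card + (VHF T k peven).card)) := by
        rw [card_VHF_step T k hk hub, f1, ← hdistinct,
          Finset.sum_insert hd1, Finset.sum_insert hd2, Finset.sum_insert hd3,
          Finset.sum_singleton]
      have e2 : (VHF T (k+1) spoke).card = (VHF T k hub).card := by
        rw [card_VHF_step T k hk spoke, f2, Finset.sum_singleton]
      have e3 : (VHF T (k+1) podd).card = (VHF T k peven).card := by
        rw [card_VHF_step T k hk podd, f3, Finset.sum_singleton]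
      have e4 : (VHF T (k+1) peven).card = (VHF T k podd).card := by
        rw [card_VHF_step T k hk peven, f4, Finset.sum_singleton]
      have hphi : Phi (k+1+1) = Phi (k+1) + Phi k := rfl
      refine ⟨by omega, by omega, by omega⟩
    · have hk0 : k = 0 := by omega
      subst hk0
      have p2 : Phi 2 = 2 := rfl
      have p1 : Phi 1 = 1 := rfl
      refine ⟨?_, ?_, ?_⟩ <;> norm_num <;> omega

lemma card_EB (T : Tc) (k : ℕ) (hk : 1 ≤ k) : (EB T k).card + 1 = Phi (k+2) := by
  have hcard : (EB T k).card = ∑ v ∈ (Finset.univ : Finset Vc), (VHF T k v).card := by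
    rw [EB, Finset.card_biUnion]
    intro w1 _ w2 _ hne
    simp only [Finset.disjoint_left]
    intro l hl1 hl2
    obtain ⟨_, hh1, _⟩ := (mem_VHF T _ w1 l).mp hl1
    obtain ⟨_, hh2, _⟩ := (mem_VHF T _ w2 l).mp hl2
    rw [hh1] at hh2
    injection hh2 with hh2
    exact hne hh2
  have hphi : Phi (k+2) = Phi (k+1) + Phi k := rfl
  cases T with
  | t1 =>
    obtain ⟨h1, h2, h3⟩ := VHF_closed t1 v0 v1 vp vn (by decide) (by decide) (by decide)
      (by decide) (by decide) (by decide) (by decide) (by decide)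
      (by decide) (by decide) (by decide) (by decide) k hk
    rw [hcard, show (Finset.univ : Finset Vc) = {v0, v1, vp, vn} from by decide,
      Finset.sum_insert (by decide), Finset.sum_insert (by decide),
      Finset.sum_insert (by decide), Finset.sum_singleton]
    omega
  | t2 =>
    obtain ⟨h1, h2, h3⟩ := VHF_closed t2 v0 v1 vn vp (by decide) (by decide) (by decide)
      (by decide) (by decide) (by decide) (by decide) (by decide)
      (by decide) (by decide) (by decide) (by decide) k hk
    rw [hcard, show (Finset.univ : Finset Vc) = {v0, v1, vp, vn} from by decide,
      Finset.sum_insert (by decide), Finset.sum_insert (by decide),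
      Finset.sum_insert (by decide), Finset.sum_singleton]
    omega
  | t3 =>
    obtain ⟨h1, h2, h3⟩ := VHF_closed t3 v1 v0 vn vp (by decide) (by decide) (by decide)
      (by decide) (by decide) (by decide) (by decide) (by decide)
      (by decide) (by decide) (by decide) (by decide) k hk
    rw [hcard, show (Finset.univ : Finset Vc) = {v0, v1, vp, vn} from by decide,
      Finset.sum_insert (by decide), Finset.sum_insert (by decide),
      Finset.sum_insert (by decide), Finset.sum_singleton]
    omega
  | t4 =>
    obtain ⟨h1, h2, h3⟩ := VHF_closed t4 v1 v0 vp vn (by decide) (by decide) (by decide)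
      (by decide) (by decide) (by decide) (by decide) (by decide)
      (by decide) (by decide) (by decide) (by decide) k hk
    rw [hcard, show (Finset.univ : Finset Vc) = {v0, v1, vp, vn} from by decide,
      Finset.sum_insert (by decide), Finset.sum_insert (by decide),
      Finset.sum_insert (by decide), Finset.sum_singleton]
    omega
open Vc Tc Finset

def pb (n : ℕ) : Bool := decide (n % 2 = 1)
lemma pb_zero : pb 0 = false := rfl
lemma pb_succ (n : ℕ) : pb (n+1) = !(pb n) := by
  have h : n % 2 = 0 ∨ n % 2 = 1 := by omega
  unfold pb
  rcases h with h | h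
  · rw [show (n+1) % 2 = 1 by omega, h]; rfl
  · rw [show (n+1) % 2 = 0 by omega, h]; rfl
lemma pb_true_pos {n : ℕ} (h : pb n = true) : 1 ≤ n := by
  by_contra hn
  have : n = 0 := by omega
  subst this
  simp [pb] at h

def bndk (T : Tc) (n : ℕ) : ℕ := (n + 1 - off T) / 2
def Bk (T : Tc) (n : ℕ) : Finset D :=
  (Finset.Icc 1 (bndk T n)).biUnion (fun k => (EB T k).image (fun β => D.elt β T))
def En (n : ℕ) : Finset D := {D.triv (pb n)} ∪ (Bk t1 n ∪ Bk t2 n ∪ Bk t3 n ∪ Bk t4 n)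

lemma off_le (T : Tc) : off T ≤ 2 := by cases T <;> decide

lemma mem_Bk {T n d} : d ∈ Bk T n ↔
    ∃ β, d = D.elt β T ∧ validB T β = true ∧ 2 * β.length + off T ≤ n + 1 := by
  simp only [Bk, Finset.mem_biUnion, Finset.mem_Icc, Finset.mem_image, mem_EB]
  constructor
  · rintro ⟨k, ⟨hk1, hk2⟩, β, ⟨hβ1, hβ2⟩, rfl⟩
    refine ⟨β, rfl, hβ2, ?_⟩
    have := off_le T
    unfold bndk at hk2
    omega
  · rintro ⟨β, rfl, hβ2, hle⟩
    have hpos := validB_pos hβ2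
    refine ⟨β.length, ⟨by omega, ?_⟩, β, ⟨rfl, hβ2⟩, rfl⟩
    unfold bndk
    omega

lemma triv_not_mem_Bk {b T n} : D.triv b ∉ Bk T n := by
  rw [mem_Bk]
  rintro ⟨β, h, -, -⟩
  exact D.noConfusion h

lemma mem_En_triv {b n} : D.triv b ∈ En n ↔ b = pb n := by
  simp only [En, Finset.mem_union, Finset.mem_singleton]
  constructor
  · rintro (h | h)
    · injection h
    · rcases h with ((h | h) | h) | h <;> exact absurd h triv_not_mem_Bk
  · rintro rfl; left; rfl

lemma elt_mem_Bk_iff {β T T' n} : D.elt β T ∈ Bk T' n ↔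
    (T = T' ∧ validB T β = true ∧ 2 * β.length + off T ≤ n + 1) := by
  rw [mem_Bk]
  constructor
  · rintro ⟨β', heq, h1, h2⟩
    injection heq with hβ hT
    subst hβ; subst hT
    exact ⟨rfl, h1, h2⟩
  · rintro ⟨rfl, h1, h2⟩
    exact ⟨β, rfl, h1, h2⟩

lemma mem_En_elt {β T n} : D.elt β T ∈ En n ↔
    (validB T β = true ∧ 2 * β.length + off T ≤ n + 1) := by
  simp only [En, Finset.mem_union, Finset.mem_singleton, elt_mem_Bk_iff]
  constructor
  · rintro (h | h)
    · exact absurd h (fun hh => D.noConfusion hh)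
    · rcases h with ((h | h) | h) | h <;> exact ⟨h.2.1, h.2.2⟩
  · rintro ⟨h1, h2⟩
    right
    cases T
    · exact Or.inl (Or.inl (Or.inl ⟨rfl, h1, h2⟩))
    · exact Or.inl (Or.inl (Or.inr ⟨rfl, h1, h2⟩))
    · exact Or.inl (Or.inr ⟨rfl, h1, h2⟩)
    · exact Or.inr ⟨rfl, h1, h2⟩

lemma En_good {d n} (h : d ∈ En n) : GoodD d := by
  cases d with
  | triv b => trivial
  | elt β T => exact (mem_En_elt.mp h).1
open Vc Tc Finset

lemma S1' : ∀ T a x, T.isAnd = true → pairT T a x = true → Vandn (Vnot x) (Vnot a) = a := by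
  decide
lemma S2' : ∀ T a, T.isAnd = true → lastT T a = true → appV (Tor T) (Vnot a) = a := by decide
lemma S5 : ∀ T a b, T.isAnd = true → pairT T a b = true → a = Vnot b ∨ a = v0 := by decide
lemma TandTor : ∀ T, T.isAnd = true → Tand (Tor T) = T := by decide
lemma TorNotAnd : ∀ T, T.isAnd = true → (Tor T).isAnd = false := by decide
lemma TorTnot : ∀ T, T.isAnd = true → Tor T = Tnot T := by decide
lemma TnotTnot : ∀ T, Tnot (Tnot T) = T := by decide
lemma VnotVnot : ∀ v, Vnot (Vnot v) = v := by decide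
lemma off_Tnot_le : ∀ T, off (Tnot T) ≤ off T + 1 := by decide
lemma off_Tand_or : ∀ T, T.isAnd = false → off (Tand T) + 1 = off T := by decide
lemma off_Tnot_or : ∀ T, T.isAnd = false → off (Tnot T) + 1 = off T := by decide
lemma off_Tor : ∀ T, T.isAnd = true → off (Tor T) = off T + 1 := by decide

lemma map_vnot_vnot (l : List Vc) : (l.map Vnot).map Vnot = l := by
  induction l with
  | nil => rfl
  | cons a t ih => simp [VnotVnot, ih]

lemma gor_unswap (T : Tc) (hA : T.isAnd = true) :
    ∀ r a, validB T (a :: r) = true → gor (Tor T) (Vnot a) (r.map Vnot) = a :: r := by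
  intro r
  induction r with
  | nil =>
    intro a h
    show [appV (Tor T) (Vnot a)] = [a]
    rw [S2' T a hA (by simpa [validB] using h)]
  | cons x r ih =>
    intro a h
    obtain ⟨h1, h2⟩ := validB_cons h
    show Vandn (Vnot x) (Vnot a) :: gor (Tor T) (Vnot x) (r.map Vnot) = a :: x :: r
    rw [S1' T a x hA h1, ih x h2]

lemma step_closure (q : Fin 3) {d : D} {n : ℕ} (hd : d ∈ En n) : mulGen q d ∈ En (n+1) := by
  have hq : q = 0 ∨ q = 1 ∨ q = 2 := by omega
  cases d with
  | triv b =>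
    have hb : b = pb n := mem_En_triv.mp hd
    rcases hq with rfl | rfl | rfl
    · have h : mulGen 0 (D.triv b) = D.triv (!b) := by simp [mulGen]
      rw [h, mem_En_triv, hb, pb_succ]
    · cases b with
      | false =>
        have h : mulGen 1 (D.triv false) = D.elt [vp] t1 := by simp [mulGen]
        rw [h, mem_En_elt]
        refine ⟨by decide, ?_⟩
        rw [show ([vp] : List Vc).length = 1 from rfl, show off t1 = 0 from rfl]
        omega
      | true =>
        have hn : 1 ≤ n := pb_true_pos hb.symm
        have h : mulGen 1 (D.triv true) = D.elt [vn] t2 := by simp [mulGen]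
        rw [h, mem_En_elt]
        refine ⟨by decide, ?_⟩
        rw [show ([vn] : List Vc).length = 1 from rfl, show off t2 = 1 from rfl]
        omega
    · cases b with
      | false =>
        have h : mulGen 2 (D.triv false) = D.elt [v0] t1 := by
          simp [mulGen, show (2:Fin 3) ≠ 0 by decide, show (2:Fin 3) ≠ 1 by decide]
        rw [h, mem_En_elt]
        refine ⟨by decide, ?_⟩
        rw [show ([v0] : List Vc).length = 1 from rfl, show off t1 = 0 from rfl]
        omega
      | true =>
        have hn : 1 ≤ n := pb_true_pos hb.symm
        have h : mulGen 2 (D.triv true) = D.elt [v0] t2 := by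
          simp [mulGen, show (2:Fin 3) ≠ 0 by decide, show (2:Fin 3) ≠ 1 by decide]
        rw [h, mem_En_elt]
        refine ⟨by decide, ?_⟩
        rw [show ([v0] : List Vc).length = 1 from rfl, show off t2 = 1 from rfl]
        omega
  | elt β T =>
    obtain ⟨hval, harith⟩ := mem_En_elt.mp hd
    have hpos := validB_pos hval
    match β, hval, harith, hpos with
    | v :: l, hval, harith, _ =>
    rcases hq with rfl | rfl | rfl
    · have h : mulGen 0 (D.elt (v::l) T) = D.elt ((v::l).map Vnot) (Tnot T) := by
        simp [mulGen]
      rw [h, mem_En_elt]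
      refine ⟨validB_map_vnot T _ hval, ?_⟩
      have := off_Tnot_le T
      rw [List.length_map]
      omega
    · by_cases hA : T.isAnd
      · have h : mulGen 1 (D.elt (v::l) T) = D.elt (v :: l) T := by
          simp [mulGen, hA, gand_eq T hA l v hval]
        rw [h, mem_En_elt]
        exact ⟨hval, by omega⟩
      · have hA' : T.isAnd = false := by simpa using hA
        have h : mulGen 1 (D.elt (v::l) T) = D.elt (v :: gor T v l) (Tand T) := by
          simp [mulGen, hA']
        rw [h, mem_En_elt]
        refine ⟨gor_valid T hA' l v v hval (gor_headpair T hA' l v hval).1, ?_⟩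
        have hlen : (v :: gor T v l).length = (v::l).length + 1 := by
          simp [len_gor]
        have := off_Tand_or T hA'
        rw [hlen]
        omega
    · by_cases hA : T.isAnd
      · have h : mulGen 2 (D.elt (v::l) T) = D.elt (v0 :: l) T := by
          simp [mulGen, hA, gand_eq T hA l v hval,
            show (2:Fin 3) ≠ 0 by decide, show (2:Fin 3) ≠ 1 by decide]
        rw [h, mem_En_elt]
        refine ⟨validB_head0 T hA l v hval, ?_⟩
        rw [show (v0 :: l : List Vc).length = (v :: l : List Vc).length from rfl]
        omega
      · have hA' : T.isAnd = false := by simpa using hA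
        have h : mulGen 2 (D.elt (v::l) T) = D.elt (v0 :: gor T v l) (Tand T) := by
          simp [mulGen, hA', show (2:Fin 3) ≠ 0 by decide, show (2:Fin 3) ≠ 1 by decide]
        rw [h, mem_En_elt]
        refine ⟨gor_valid T hA' l v v0 hval (gor_headpair T hA' l v hval).2, ?_⟩
        have hlen : (v0 :: gor T v l).length = (v::l).length + 1 := by
          simp [len_gor]
        have := off_Tand_or T hA'
        rw [hlen]
        omega

lemma step_surj {n : ℕ} {d : D} (hd : d ∈ En (n+1)) :
    ∃ q d', d' ∈ En n ∧ mulGen q d' = d := by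
  cases d with
  | triv b =>
    have hb : b = pb (n+1) := mem_En_triv.mp hd
    refine ⟨0, D.triv (pb n), mem_En_triv.mpr rfl, ?_⟩
    have h : mulGen 0 (D.triv (pb n)) = D.triv (!(pb n)) := by simp [mulGen]
    rw [h, hb, pb_succ]
  | elt β T =>
    obtain ⟨hval, harith⟩ := mem_En_elt.mp hd
    have hpos := validB_pos hval
    by_cases hA : T.isAnd
    · by_cases hsm : 2 * β.length + off T ≤ n + 1
      · match β, hval, hsm with
        | v :: l, hval, hsm =>
        refine ⟨1, D.elt (v :: l) T, mem_En_elt.mpr ⟨hval, hsm⟩, ?_⟩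
        simp [mulGen, hA, gand_eq T hA l v hval]
      · match β, hval, harith, hpos with
        | [v], hval, harith, _ =>
          have hlast : lastT T v = true := by simpa [validB] using hval
          cases T with
          | t1 =>
            have hn : n = 0 := by
              rw [show ([v] : List Vc).length = 1 from rfl,
                show off t1 = 0 from rfl] at harith hsm
              omega
            subst hn
            have hv : v = v0 ∨ v = vp := by revert hlast; cases v <;> decide
            rcases hv with rfl | rfl
            · exact ⟨2, D.triv false, mem_En_triv.mpr rfl, by
                simp [mulGen, show (2:Fin 3) ≠ 0 by decide, show (2:Fin 3) ≠ 1 by decide]⟩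
            · exact ⟨1, D.triv false, mem_En_triv.mpr rfl, by simp [mulGen]⟩
          | t2 =>
            have hn : n = 1 := by
              rw [show ([v] : List Vc).length = 1 from rfl,
                show off t2 = 1 from rfl] at harith hsm
              omega
            subst hn
            have hv : v = v0 ∨ v = vn := by revert hlast; cases v <;> decide
            rcases hv with rfl | rfl
            · exact ⟨2, D.triv true, mem_En_triv.mpr rfl, by
                simp [mulGen, show (2:Fin 3) ≠ 0 by decide, show (2:Fin 3) ≠ 1 by decide]⟩
            · exact ⟨1, D.triv true, mem_En_triv.mpr rfl, by simp [mulGen]⟩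
          | t3 => exact absurd hA (by decide)
          | t4 => exact absurd hA (by decide)
        | b0 :: b1 :: r, hval, harith, _ =>
          obtain ⟨hp01, hval2⟩ := validB_cons hval
          have hvd : validB (Tor T) ((b1 :: r).map Vnot) = true := by
            rw [TorTnot T hA]
            exact validB_map_vnot T _ hval2
          have hmem : D.elt ((b1 :: r).map Vnot) (Tor T) ∈ En n := by
            rw [mem_En_elt]
            refine ⟨hvd, ?_⟩
            rw [List.length_map, off_Tor T hA]
            rw [show (b0 :: b1 :: r : List Vc).length = (b1 :: r : List Vc).length + 1
              from rfl] at harith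
            omega
          have hor : (Tor T).isAnd = false := TorNotAnd T hA
          have hgor : gor (Tor T) (Vnot b1) (r.map Vnot) = b1 :: r :=
            gor_unswap T hA r b1 hval2
          rcases S5 T b0 b1 hA hp01 with rfl | rfl
          · refine ⟨1, D.elt ((b1 :: r).map Vnot) (Tor T), hmem, ?_⟩
            show mulGen 1 (D.elt (Vnot b1 :: r.map Vnot) (Tor T)) = _
            have h : mulGen 1 (D.elt (Vnot b1 :: r.map Vnot) (Tor T)) =
                D.elt (Vnot b1 :: gor (Tor T) (Vnot b1) (r.map Vnot)) (Tand (Tor T)) := by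
              simp [mulGen, hor]
            rw [h, hgor, TandTor T hA]
          · refine ⟨2, D.elt ((b1 :: r).map Vnot) (Tor T), hmem, ?_⟩
            show mulGen 2 (D.elt (Vnot b1 :: r.map Vnot) (Tor T)) = _
            have h : mulGen 2 (D.elt (Vnot b1 :: r.map Vnot) (Tor T)) =
                D.elt (v0 :: gor (Tor T) (Vnot b1) (r.map Vnot)) (Tand (Tor T)) := by
              simp [mulGen, hor, show (2:Fin 3) ≠ 0 by decide, show (2:Fin 3) ≠ 1 by decide]
            rw [h, hgor, TandTor T hA]
    · have hA' : T.isAnd = false := by simpa using hA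
      refine ⟨0, D.elt (β.map Vnot) (Tnot T), ?_, ?_⟩
      · rw [mem_En_elt]
        refine ⟨validB_map_vnot T β hval, ?_⟩
        rw [List.length_map]
        have := off_Tnot_or T hA'
        omega
      · have h : mulGen 0 (D.elt (β.map Vnot) (Tnot T)) =
            D.elt ((β.map Vnot).map Vnot) (Tnot (Tnot T)) := by simp [mulGen]
        rw [h, map_vnot_vnot, TnotTnot]
open Vc Tc Finset

lemma descD_mem : ∀ w : List (Fin 3), descD w ∈ En w.length
  | [] => mem_En_triv.mpr rfl
  | q :: w => step_closure q (descD_mem w)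

lemma En_reach : ∀ n : ℕ, ∀ d ∈ En n, ∃ w : List (Fin 3), w.length = n ∧ descD w = d := by
  intro n
  induction n with
  | zero =>
    intro d hd
    cases d with
    | triv b => exact ⟨[], rfl, by rw [mem_En_triv.mp hd]; rfl⟩
    | elt β T =>
      obtain ⟨hv, ha⟩ := mem_En_elt.mp hd
      have := validB_pos hv
      exact absurd ha (by omega)
  | succ n ih =>
    intro d hd
    obtain ⟨q, d', hd', heq⟩ := step_surj hd
    obtain ⟨w, hw, rfl⟩ := ih d' hd'
    exact ⟨q :: w, by simp [hw],
      by rw [show descD (q :: w) = mulGen q (descD w) from rfl, heq]⟩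

theorem growth_eq_card (n : ℕ) : growth a6Tr a6Out n = (En n).card := by
  unfold growth
  have hset : {g : (ℕ → Fin 2) → (ℕ → Fin 2) |
      ∃ w : List (Fin 3), w.length = n ∧ wordTrans a6Tr a6Out w = g} =
      evalD '' (↑(En n) : Set D) := by
    ext g
    simp only [Set.mem_setOf_eq, Set.mem_image, Finset.mem_coe]
    constructor
    · rintro ⟨w, hw, rfl⟩
      exact ⟨descD w, hw ▸ descD_mem w, (wordTrans_eq w).symm⟩
    · rintro ⟨d, hd, rfl⟩
      obtain ⟨w, hw, rfl⟩ := En_reach n d hd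
      exact ⟨w, hw, wordTrans_eq w⟩
  rw [hset, Set.ncard_image_of_injOn, Set.ncard_coe_finset]
  intro d hd d' hd' h
  exact evalD_inj d d' (En_good (Finset.mem_coe.mp hd)) (En_good (Finset.mem_coe.mp hd')) h

lemma card_Bk (T : Tc) (n : ℕ) :
    (Bk T n).card = ∑ k ∈ Finset.Icc 1 (bndk T n), (EB T k).card := by
  rw [Bk, Finset.card_biUnion]
  · exact Finset.sum_congr rfl fun k _ =>
      Finset.card_image_of_injective _ (fun a b h => by injection h)
  · intro k1 h1 k2 h2 hne
    simp only [Finset.disjoint_left, Finset.mem_image]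
    rintro d ⟨β, hβ, rfl⟩ ⟨β', hβ', he⟩
    obtain ⟨hl, -⟩ := (mem_EB T k1 β).mp hβ
    obtain ⟨hl', -⟩ := (mem_EB T k2 β').mp hβ'
    injection he with he hTe
    subst he
    exact hne (by omega)

lemma Bk_disj {T T' : Tc} (n : ℕ) (h : T ≠ T') : Disjoint (Bk T n) (Bk T' n) := by
  simp only [Finset.disjoint_left]
  intro d hd hd'
  obtain ⟨β, rfl, -, -⟩ := mem_Bk.mp hd
  obtain ⟨β', he, -, -⟩ := mem_Bk.mp hd'
  injection he with hβe hT
  exact h hT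

lemma card_En (n : ℕ) : (En n).card = 1 +
    ((∑ k ∈ Finset.Icc 1 (bndk t1 n), (EB t1 k).card) +
     (∑ k ∈ Finset.Icc 1 (bndk t2 n), (EB t2 k).card) +
     (∑ k ∈ Finset.Icc 1 (bndk t3 n), (EB t3 k).card) +
     (∑ k ∈ Finset.Icc 1 (bndk t4 n), (EB t4 k).card)) := by
  have d12 : Disjoint (Bk t1 n) (Bk t2 n) := Bk_disj n (by decide)
  have d13 : Disjoint (Bk t1 n) (Bk t3 n) := Bk_disj n (by decide)
  have d14 : Disjoint (Bk t1 n) (Bk t4 n) := Bk_disj n (by decide)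
  have d23 : Disjoint (Bk t2 n) (Bk t3 n) := Bk_disj n (by decide)
  have d24 : Disjoint (Bk t2 n) (Bk t4 n) := Bk_disj n (by decide)
  have d34 : Disjoint (Bk t3 n) (Bk t4 n) := Bk_disj n (by decide)
  have d123 : Disjoint (Bk t1 n ∪ Bk t2 n) (Bk t3 n) :=
    Finset.disjoint_union_left.mpr ⟨d13, d23⟩
  have d1234 : Disjoint (Bk t1 n ∪ Bk t2 n ∪ Bk t3 n) (Bk t4 n) :=
    Finset.disjoint_union_left.mpr ⟨Finset.disjoint_union_left.mpr ⟨d14, d24⟩, d34⟩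
  have dtriv : Disjoint ({D.triv (pb n)} : Finset D)
      (Bk t1 n ∪ Bk t2 n ∪ Bk t3 n ∪ Bk t4 n) := by
    simp only [Finset.disjoint_left, Finset.mem_singleton]
    rintro d rfl hd
    rcases Finset.mem_union.mp hd with h | h
    · rcases Finset.mem_union.mp h with h | h
      · rcases Finset.mem_union.mp h with h | h <;> exact triv_not_mem_Bk h
      · exact triv_not_mem_Bk h
    · exact triv_not_mem_Bk h
  rw [En, Finset.card_union_of_disjoint dtriv, Finset.card_union_of_disjoint d1234,
    Finset.card_union_of_disjoint d123, Finset.card_union_of_disjoint d12,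
    Finset.card_singleton, card_Bk, card_Bk, card_Bk, card_Bk]

lemma sumEB (T : Tc) : ∀ m : ℕ, (∑ k ∈ Finset.Icc 1 m, (EB T k).card) + m + 5 = Phi (m+4) := by
  intro m
  induction m with
  | zero =>
    rw [show Finset.Icc 1 0 = (∅ : Finset ℕ) from rfl, Finset.sum_empty]
    rfl
  | succ m ih =>
    rw [Finset.sum_Icc_succ_top (by omega : 1 ≤ m + 1)]
    have h1 : (EB T (m+1)).card + 1 = Phi (m+3) := card_EB T (m+1) (by omega)
    have h2 : Phi (m+1+4) = Phi (m+4) + Phi (m+3) := rfl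
    omega
end A6

/-- The growth function `γ` of the automaton `A₆` is given by Fibonacci numbers: for every
`n ≥ 1`, if `n` is even then `γ(n) = Φ_{⌊n/2⌋+6} + Φ_{⌊n/2⌋+4} − 2n − 18`, and if `n` is
odd then `γ(n) = Φ_{⌊n/2⌋+6} + 2·Φ_{⌊n/2⌋+4} − 2n − 18` (stated additively in `ℕ`);
in particular `γ` has exponential growth order. -/
theorem growth_a6 (n : ℕ) (hn : 1 ≤ n) :
    (Even n →
      growth a6Tr a6Out n + 2 * n + 18 = Phi (n / 2 + 6) + Phi (n / 2 + 4)) ∧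
    (Odd n →
      growth a6Tr a6Out n + 2 * n + 18 = Phi (n / 2 + 6) + 2 * Phi (n / 2 + 4)) := by
  open A6 in
  constructor
  · intro he
    obtain ⟨m, rfl⟩ := he
    have hm : 1 ≤ m := by omega
    rw [show (m + m) / 2 = m from by omega]
    rw [A6.growth_eq_card, A6.card_En]
    rw [show A6.bndk A6.Tc.t1 (m+m) = m from by
        unfold A6.bndk; rw [show A6.off A6.Tc.t1 = 0 from rfl]; omega,
      show A6.bndk A6.Tc.t2 (m+m) = m from by
        unfold A6.bndk; rw [show A6.off A6.Tc.t2 = 1 from rfl]; omega,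
      show A6.bndk A6.Tc.t3 (m+m) = m from by
        unfold A6.bndk; rw [show A6.off A6.Tc.t3 = 1 from rfl]; omega,
      show A6.bndk A6.Tc.t4 (m+m) = m - 1 from by
        unfold A6.bndk; rw [show A6.off A6.Tc.t4 = 2 from rfl]; omega]
    have s1 := A6.sumEB A6.Tc.t1 m
    have s2 := A6.sumEB A6.Tc.t2 m
    have s3 := A6.sumEB A6.Tc.t3 m
    have s4 := A6.sumEB A6.Tc.t4 (m-1)
    rw [show m - 1 + 4 = m + 3 from by omega] at s4
    have p6 : Phi (m+6) = Phi (m+5) + Phi (m+4) := rfl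
    have p5 : Phi (m+5) = Phi (m+4) + Phi (m+3) := rfl
    omega
  · intro ho
    obtain ⟨m, rfl⟩ := ho
    rw [show (2*m + 1) / 2 = m from by omega]
    rw [A6.growth_eq_card, A6.card_En]
    rw [show A6.bndk A6.Tc.t1 (2*m+1) = m+1 from by
        unfold A6.bndk; rw [show A6.off A6.Tc.t1 = 0 from rfl]; omega,
      show A6.bndk A6.Tc.t2 (2*m+1) = m from by
        unfold A6.bndk; rw [show A6.off A6.Tc.t2 = 1 from rfl]; omega,
      show A6.bndk A6.Tc.t3 (2*m+1) = m from by
        unfold A6.bndk; rw [show A6.off A6.Tc.t3 = 1 from rfl]; omega,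
      show A6.bndk A6.Tc.t4 (2*m+1) = m from by
        unfold A6.bndk; rw [show A6.off A6.Tc.t4 = 2 from rfl]; omega]
    have s1 := A6.sumEB A6.Tc.t1 (m+1)
    have s2 := A6.sumEB A6.Tc.t2 m
    have s3 := A6.sumEB A6.Tc.t3 m
    have s4 := A6.sumEB A6.Tc.t4 m
    rw [show m + 1 + 4 = m + 5 from rfl] at s1
    have p6 : Phi (m+6) = Phi (m+5) + Phi (m+4) := rfl
    have p5 : Phi (m+5) = Phi (m+4) + Phi (m+3) := rfl
    omega
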